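/- arXiv:1309.7489 — 2 statements merged into one kernel-verified Lean document; each statement's English description precedes it below -/
import Mathlib

section
/- Let X be the inverse limit of an inverse sequence of compact metric spaces X_n with bonding maps ω_{n+1} : X_{n+1} → X_n, and let K be a CW-complex. Suppose for each n there is a representative collection 𝓕_n of partial maps from X_n to K such that every f ∈ 𝓕_n is extendable in the inverse system (i.e., there exists j > n such that the composition of the bonding map ω^n_j : X_j → X_n restricted to (ω^n_j)^{-1}(dom f) with f extends continuously over X_j). Then every continuous map from a closed subset of X to K extends continuously over X (i.e., edim X ≤ K). -/
universe u

/-- Composite bonding map `ω^i_{i+j} : X_{i+j} → X_i` of an inverse sequence. -/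
def bond {X : ℕ → Type u} (ω : ∀ n, X (n + 1) → X n) (i : ℕ) : ∀ j, X (i + j) → X i
  | 0 => id
  | j + 1 => fun x => bond ω i j (ω (i + j) x)

section Helpers

lemma continuous_of_isEmpty {Z W : Type*} [TopologicalSpace Z] [TopologicalSpace W] [IsEmpty Z]
    (f : Z → W) : Continuous f :=
  continuous_iff_continuousAt.2 fun x => isEmptyElim x

variable {X : ℕ → Type u} [∀ n, TopologicalSpace (X n)]

omit [∀ n, TopologicalSpace (X n)] in
lemma bond_mem (ω : ∀ n, X (n + 1) → X n) {x : ∀ n, X n}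
    (hx : ∀ n, ω n (x (n + 1)) = x n) (i j : ℕ) : bond ω i j (x (i + j)) = x i := by
  induction j with
  | zero => rfl
  | succ j ih =>
      show bond ω i j (ω (i + j) (x (i + j + 1))) = x i
      rw [hx (i + j)]; exact ih

lemma bond_continuous (ω : ∀ n, X (n + 1) → X n) (hω : ∀ n, Continuous (ω n)) (i j : ℕ) :
    Continuous (bond ω i j) := by
  induction j with
  | zero => exact continuous_id
  | succ j ih => exact ih.comp (hω (i + j))

noncomputable def sig (ω : ∀ n, X (n + 1) → X n) (x₀ : ∀ n, X n) (r : ℕ) (y : X r) :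
    ∀ i, X i := fun i =>
  if h : i ≤ r then bond ω i (r - i) (cast (congrArg X (Nat.add_sub_cancel' h)).symm y)
  else x₀ i

lemma sig_cast_cont (ω : ∀ n, X (n + 1) → X n) (hω : ∀ n, Continuous (ω n))
    (i j r : ℕ) (e : i + j = r) :
    Continuous fun y : X r => bond ω i j (cast (congrArg X e).symm y) := by
  subst e
  exact bond_continuous ω hω i j

lemma sig_continuous (ω : ∀ n, X (n + 1) → X n) (hω : ∀ n, Continuous (ω n))
    (x₀ : ∀ n, X n) (r : ℕ) : Continuous (sig ω x₀ r) := by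
  apply continuous_pi
  intro i
  unfold sig
  by_cases h : i ≤ r
  · simp only [dif_pos h]
    exact sig_cast_cont ω hω i (r - i) r (Nat.add_sub_cancel' h)
  · simp only [dif_neg h]
    exact continuous_const

omit [∀ n, TopologicalSpace (X n)] in
lemma sig_spec (ω : ∀ n, X (n + 1) → X n) (x₀ : ∀ n, X n) {x : ∀ n, X n}
    (hx : ∀ n, ω n (x (n + 1)) = x n) (r i : ℕ) (h : i ≤ r) :
    sig ω x₀ r (x r) i = x i := by
  unfold sig
  rw [dif_pos h]
  have key : ∀ j r' (e : i + j = r'),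
      bond ω i j (cast (congrArg X e).symm (x r')) = x i := by
    intro j r' e; subst e; exact bond_mem ω hx i j
  exact key (r - i) r (Nat.add_sub_cancel' h)

end Helpers


set_option maxHeartbeats 1000000 in
/-- From the ANE property of `K`, produce an open neighborhood `V` of the diagonal in `K × K`
such that any two `V`-close maps into `K` are homotopic. -/
lemma gadget {K : Type u} [MetricSpace K]
    (hANE : ∀ (Y : Type u) [MetricSpace Y] (A : Set Y), IsClosed A → ∀ f : C(A, K),
      ∃ (U : Set Y) (_ : IsOpen U) (hAU : A ⊆ U) (g : C(U, K)),
        ∀ (a : Y) (ha : a ∈ A), g ⟨a, hAU ha⟩ = f ⟨a, ha⟩) :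
    ∃ V : Set (K × K), IsOpen V ∧ (∀ k : K, (k, k) ∈ V) ∧
      ∀ {Z : Type u} [TopologicalSpace Z] (φ ψ : C(Z, K)),
        (∀ z, (φ z, ψ z) ∈ V) → φ.Homotopic ψ := by
  classical
  set D : Set ((K × K) × unitInterval) :=
    {q | q.1.1 = q.1.2 ∨ q.2 = 0 ∨ q.2 = 1} with hD_def
  have hD : IsClosed D := by
    have h1 : IsClosed {q : (K × K) × unitInterval | q.1.1 = q.1.2} :=
      isClosed_eq (continuous_fst.fst) (continuous_fst.snd)
    have h2 : IsClosed {q : (K × K) × unitInterval | q.2 = 0} :=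
      isClosed_eq continuous_snd continuous_const
    have h3 : IsClosed {q : (K × K) × unitInterval | q.2 = 1} :=
      isClosed_eq continuous_snd continuous_const
    exact h1.union (h2.union h3)
  -- the partial map on D
  have hfDc : Continuous fun q : D => if q.val.2 = (1 : unitInterval) then q.val.1.2 else q.val.1.1 := by
    apply Continuous.if
    · intro a ha
      -- a is in the frontier of S := {x | x.val.2 = 1}
      have hS : IsClosed {x : D | x.val.2 = (1 : unitInterval)} :=
        isClosed_eq (continuous_snd.comp continuous_subtype_val) continuous_const
      have ha1 : a.val.2 = (1 : unitInterval) := by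
        have := frontier_subset_closure ha
        rwa [hS.closure_eq] at this
      have ha2 : a ∈ closure {x : D | ¬ x.val.2 = (1 : unitInterval)} := by
        rw [frontier_eq_closure_inter_closure] at ha
        exact ha.2
      have hT : IsClosed ({x : D | x.val.1.1 = x.val.1.2} ∪ {x : D | x.val.2 = (0 : unitInterval)}) := by
        refine IsClosed.union ?_ ?_
        · exact isClosed_eq ((continuous_fst.comp (continuous_fst.comp continuous_subtype_val)))
            ((continuous_snd.comp (continuous_fst.comp continuous_subtype_val)))
        · exact isClosed_eq (continuous_snd.comp continuous_subtype_val) continuous_const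
      have hsub : {x : D | ¬ x.val.2 = (1 : unitInterval)} ⊆
          {x : D | x.val.1.1 = x.val.1.2} ∪ {x : D | x.val.2 = (0 : unitInterval)} := by
        intro x hx
        rcases x.property with h | h | h
        · exact Or.inl h
        · exact Or.inr h
        · exact absurd h hx
      have haT := (closure_minimal hsub hT) ha2
      rcases haT with h | h
      · exact h.symm
      · exact absurd (h.symm.trans ha1) zero_ne_one
    · exact continuous_snd.comp (continuous_fst.comp continuous_subtype_val)
    · exact continuous_fst.comp (continuous_fst.comp continuous_subtype_val)
  obtain ⟨U, hUo, hDU, G, hG⟩ := hANE ((K × K) × unitInterval) D hD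
    ⟨fun q => if q.val.2 = (1 : unitInterval) then q.val.1.2 else q.val.1.1, hfDc⟩
  refine ⟨{c : K × K | ∀ t : unitInterval, (c, t) ∈ U}, ?_, ?_, ?_⟩
  · -- openness
    have he : {c : K × K | ∀ t : unitInterval, (c, t) ∈ U} = (Prod.fst '' Uᶜ)ᶜ := by
      ext c
      simp only [Set.mem_setOf_eq, Set.mem_compl_iff, Set.mem_image, not_exists]
      constructor
      · rintro h q ⟨hq1, hq2⟩
        subst hq2
        exact hq1 (h q.2)
      · intro h t
        by_contra ht
        exact h ((c, t)) ⟨ht, rfl⟩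
    rw [he]
    exact (isClosedMap_fst_of_compactSpace _ hUo.isClosed_compl).isOpen_compl
  · intro k t
    exact hDU (Or.inl rfl)
  · intro Z _ φ ψ hpair
    refine ⟨⟨⟨fun q => G ⟨((φ q.2, ψ q.2), q.1), hpair q.2 q.1⟩, ?_⟩, ?_, ?_⟩⟩
    · exact G.continuous.comp (Continuous.subtype_mk
        (((φ.continuous.comp continuous_snd).prodMk
          (ψ.continuous.comp continuous_snd)).prodMk continuous_fst) _)
    · intro x
      have hmem : (((φ x, ψ x), (0 : unitInterval))) ∈ D := Or.inr (Or.inl rfl)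
      have h1 := hG ((φ x, ψ x), (0 : unitInterval)) hmem
      refine h1.trans ?_
      simp only [ContinuousMap.coe_mk]
      rw [if_neg]
      exact zero_ne_one
    · intro x
      have hmem : (((φ x, ψ x), (1 : unitInterval))) ∈ D := Or.inr (Or.inr rfl)
      have h1 := hG ((φ x, ψ x), (1 : unitInterval)) hmem
      refine h1.trans ?_
      simp



lemma continuous_of_isEmpty' {Z W : Type*} [TopologicalSpace Z] [TopologicalSpace W] [IsEmpty Z]
    (f : Z → W) : Continuous f :=
  continuous_iff_continuousAt.2 fun x => isEmptyElim x

lemma pasting' {Z W : Type*} [TopologicalSpace Z] [TopologicalSpace W] {s t : Set Z}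
    (hs : IsClosed s) (ht : IsClosed t) {f g : Z → W}
    (hf : ContinuousOn f s) (hg : ContinuousOn g t)
    (heq : ∀ x ∈ s ∩ t, f x = g x) [∀ x, Decidable (x ∈ s)] :
    ContinuousOn (fun x => if x ∈ s then f x else g x) (s ∪ t) := by
  intro x hx
  apply ContinuousWithinAt.union
  · by_cases hxs : x ∈ s
    · exact (hf x hxs).congr (fun y hy => if_pos hy) (if_pos hxs)
    · exact continuousWithinAt_of_notMem_closure (by rwa [hs.closure_eq])
  · by_cases hxt : x ∈ t
    · refine (hg x hxt).congr (fun y hy => ?_) ?_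
      · by_cases hys : y ∈ s
        · rw [if_pos hys]; exact heq y ⟨hys, hy⟩
        · rw [if_neg hys]
      · by_cases hxs : x ∈ s
        · rw [if_pos hxs]; exact heq x ⟨hxs, hxt⟩
        · rw [if_neg hxs]
    · exact continuousWithinAt_of_notMem_closure (by rwa [ht.closure_eq])

set_option maxHeartbeats 1000000 in
/-- Borsuk homotopy extension: on a compact metric space, if a map on a closed set is
homotopic to the restriction of a globally defined map, then it extends globally. -/
lemma het {L' K : Type u} [MetricSpace L'] [CompactSpace L'] [MetricSpace K]
    (hANE : ∀ (Y : Type u) [MetricSpace Y] (A : Set Y), IsClosed A → ∀ f : C(A, K),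
      ∃ (U : Set Y) (_ : IsOpen U) (hAU : A ⊆ U) (g : C(U, K)),
        ∀ (a : Y) (ha : a ∈ A), g ⟨a, hAU ha⟩ = f ⟨a, ha⟩)
    {A : Set L'} (hA : IsClosed A) (f : C(A, K)) (G : C(L', K))
    (hhom : (G.restrict A).Homotopic f) :
    ∃ g : C(L', K), ∀ (a : L') (ha : a ∈ A), g a = f ⟨a, ha⟩ := by
  classical
  by_cases hK : Nonempty K
  swap
  · exact ⟨G, fun a ha => absurd ⟨f ⟨a, ha⟩⟩ hK⟩
  obtain ⟨k₀⟩ := hK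
  obtain ⟨Ht⟩ := hhom
  set s1 : Set (L' × unitInterval) := {q | q.1 ∈ A} with hs1_def
  set s2 : Set (L' × unitInterval) := {q | q.2 = 0} with hs2_def
  have hs1 : IsClosed s1 := hA.preimage continuous_fst
  have hs2 : IsClosed s2 := isClosed_eq continuous_snd continuous_const
  set Hb : L' × unitInterval → K :=
    fun q => if h : q.1 ∈ A then Ht (q.2, ⟨q.1, h⟩) else k₀ with hHb_def
  have hHbc : ContinuousOn Hb s1 := by
    rw [continuousOn_iff_continuous_restrict]
    have he : s1.restrict Hb = fun q : s1 => Ht (q.val.2, ⟨q.val.1, q.property⟩) :=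
      funext fun q => dif_pos q.property
    change Continuous (s1.restrict Hb)
    rw [he]
    exact Ht.continuous.comp (Continuous.prodMk
      (continuous_snd.comp continuous_subtype_val)
      (Continuous.subtype_mk (continuous_fst.comp continuous_subtype_val) _))
  set F : L' × unitInterval → K := fun q => if q ∈ s1 then Hb q else G q.1 with hF_def
  have hFc : ContinuousOn F (s1 ∪ s2) := by
    refine pasting' hs1 hs2 hHbc ((G.continuous.comp continuous_fst).continuousOn) ?_
    rintro ⟨x, t⟩ ⟨hx1, hx2⟩
    have ht0 : t = 0 := hx2
    subst ht0
    show (if h : x ∈ A then Ht ((0 : unitInterval), ⟨x, h⟩) else k₀) = G x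
    rw [dif_pos (show x ∈ A from hx1)]
    simpa using Ht.map_zero_left ⟨x, hx1⟩
  set B : Set (L' × unitInterval) := s1 ∪ s2 with hB_def
  have hB : IsClosed B := hs1.union hs2
  obtain ⟨U, hUo, hBU, g3, hg3⟩ := hANE (L' × unitInterval) B hB
    ⟨B.restrict F, continuousOn_iff_continuous_restrict.mp hFc⟩
  set W : Set L' := {x | ∀ t : unitInterval, (x, t) ∈ U} with hW_def
  have hWo : IsOpen W := by
    have he : W = (Prod.fst '' Uᶜ)ᶜ := by
      ext c
      simp only [Set.mem_setOf_eq, Set.mem_compl_iff, Set.mem_image, not_exists]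
      constructor
      · rintro h q ⟨hq1, hq2⟩
        subst hq2
        exact hq1 (h q.2)
      · intro h t
        by_contra ht
        exact h ((c, t)) ⟨ht, rfl⟩
    rw [he]
    exact (isClosedMap_fst_of_compactSpace _ hUo.isClosed_compl).isOpen_compl
  have hAW : A ⊆ W := fun a ha t => hBU (Or.inl ha)
  obtain ⟨u, hu0, hu1, hu01⟩ := exists_continuous_zero_one_of_isClosed
    hWo.isClosed_compl hA (Set.disjoint_left.mpr fun x hx hxA => hx (hAW hxA))
  have hmem : ∀ x : L', (x, (⟨u x, hu01 x⟩ : unitInterval)) ∈ U := by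
    intro x
    by_cases hxW : x ∈ W
    · exact hxW _
    · have h0 : u x = 0 := hu0 hxW
      have he : ((x, (⟨u x, hu01 x⟩ : unitInterval)) : L' × unitInterval)
          = (x, (0 : unitInterval)) := by
        exact Prod.ext rfl (Subtype.ext h0)
      rw [he]
      exact hBU (Or.inr rfl)
  set m : L' → U := fun x => ⟨(x, ⟨u x, hu01 x⟩), hmem x⟩ with hm_def
  have hmc : Continuous m := Continuous.subtype_mk
    (continuous_id.prodMk (Continuous.subtype_mk u.continuous _)) _
  refine ⟨g3.comp ⟨m, hmc⟩, ?_⟩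
  intro a ha
  have hu1a : u a = 1 := hu1 ha
  have hBmem : ((a, (1 : unitInterval)) : L' × unitInterval) ∈ B := Or.inl ha
  have he : m a = ⟨(a, (1 : unitInterval)), hBU hBmem⟩ :=
    Subtype.ext (Prod.ext rfl (Subtype.ext hu1a))
  show g3 (m a) = f ⟨a, ha⟩
  rw [he]
  have h1 := hg3 (a, (1 : unitInterval)) hBmem
  refine h1.trans ?_
  show F (a, (1 : unitInterval)) = f ⟨a, ha⟩
  have hin : ((a, (1 : unitInterval)) : L' × unitInterval) ∈ s1 := ha
  simp only [F, if_pos hin, Hb, dif_pos (show a ∈ A from ha)]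
  have := Ht.map_one_left ⟨a, ha⟩
  simpa using this


set_option maxHeartbeats 1600000 in
/-- Let `X` be the inverse limit of an inverse sequence of compact metric spaces `X n`
with continuous bonding maps `ω n : X (n+1) → X n`, and let `K` be an ANE (e.g. a
CW-complex). If for each `n` there is a representative collection `𝓕 n` of partial maps
from `X n` to `K` each member of which is extendable in the inverse system, then every
continuous map from a closed subset of the limit to `K` extends over the limit
(i.e. `edim X ≤ K`). -/
theorem stmt_5 (X : ℕ → Type u) [∀ n, MetricSpace (X n)] [∀ n, CompactSpace (X n)]
    (ω : ∀ n, X (n + 1) → X n) (hω : ∀ n, Continuous (ω n))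
    (K : Type u) [MetricSpace K]
    (hANE : ∀ (Y : Type u) [MetricSpace Y] (A : Set Y), IsClosed A → ∀ f : C(A, K),
      ∃ (U : Set Y) (_ : IsOpen U) (hAU : A ⊆ U) (g : C(U, K)),
        ∀ (a : Y) (ha : a ∈ A), g ⟨a, hAU ha⟩ = f ⟨a, ha⟩)
    (𝓕 : ∀ n, Set ((F : {F : Set (X n) // IsClosed F}) × C(F.1, K)))
    (hrep : ∀ n (F' : Set (X n)), IsClosed F' → ∀ f' : C(F', K),
      ∃ p ∈ 𝓕 n, ∃ hsub : F' ⊆ p.1.1,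
        (p.2.comp ⟨Set.inclusion hsub, continuous_inclusion hsub⟩).Homotopic f')
    (hext : ∀ n, ∀ p ∈ 𝓕 n, ∃ j : ℕ, 0 < j ∧
      ∃ g : C(X (n + j), K), ∀ (x : X (n + j)) (hx : bond ω n j x ∈ p.1.1),
        g x = p.2 ⟨bond ω n j x, hx⟩)
    (L : Set (∀ n, X n)) (hL : ∀ x, x ∈ L ↔ ∀ n, ω n (x (n + 1)) = x n) :
    ∀ (A : Set L), IsClosed A → ∀ f : C(A, K),
      ∃ g : C(L, K), ∀ (a : L) (ha : a ∈ A), g a = f ⟨a, ha⟩ := by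
  classical
  intro A hA f
  by_cases hLne : L.Nonempty
  swap
  · haveI : IsEmpty L := ⟨fun x => hLne ⟨x.1, x.2⟩⟩
    exact ⟨⟨fun x => isEmptyElim x, continuous_of_isEmpty _⟩,
      fun a _ => (IsEmpty.false a).elim⟩
  obtain ⟨x₀, hx₀⟩ := hLne
  have hx₀p : ∀ n, ω n (x₀ (n + 1)) = x₀ n := (hL x₀).1 hx₀
  -- K is nonempty
  have hKne : Nonempty K := by
    haveI : IsEmpty (↥(∅ : Set (X 0))) := ⟨fun a => a.2⟩
    obtain ⟨p, hp𝓕, -, -⟩ := hrep 0 ∅ isClosed_empty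
      ⟨fun a => isEmptyElim a, continuous_of_isEmpty _⟩
    obtain ⟨j, -, g0, -⟩ := hext 0 p hp𝓕
    exact ⟨g0 (x₀ (0 + j))⟩
  obtain ⟨k₀⟩ := hKne
  -- install a metric on the product compatible with the product topology
  letI : MetricSpace (∀ n, X n) := PiCountable.metricSpace
  have hLc : IsClosed L := by
    have he : L = ⋂ n, {x : ∀ n, X n | ω n (x (n + 1)) = x n} := by
      ext x
      simp only [Set.mem_iInter, Set.mem_setOf_eq]
      exact hL x
    rw [he]
    exact isClosed_iInter fun n =>
      isClosed_eq ((hω n).comp (continuous_apply (n + 1))) (continuous_apply n)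
  haveI : CompactSpace L := isCompact_iff_compactSpace.mp hLc.isCompact
  -- A as a closed subset of the product
  set Ah : Set (∀ n, X n) := Subtype.val '' A with hAh_def
  have hAhL : Ah ⊆ L := by
    rintro _ ⟨a, -, rfl⟩
    exact a.2
  have hAhcomp : IsCompact Ah := (hA.isCompact).image continuous_subtype_val
  have hAhc : IsClosed Ah := hAhcomp.isClosed
  have hAhp : ∀ z ∈ Ah, ∀ n, ω n (z (n + 1)) = z n := fun z hz => (hL z).1 (hAhL hz)
  -- transfer f to Ah
  have ehm : ∀ z : Ah, (⟨z.1, hAhL z.2⟩ : L) ∈ A := by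
    rintro ⟨z, hz⟩
    obtain ⟨a, ha, he⟩ := hz
    have : (⟨z, hAhL ⟨a, ha, he⟩⟩ : L) = a := Subtype.ext he.symm
    rw [this]
    exact ha
  set eh : Ah → A := fun z => ⟨⟨z.1, hAhL z.2⟩, ehm z⟩ with heh_def
  have ehc : Continuous eh := Continuous.subtype_mk
    (Continuous.subtype_mk continuous_subtype_val _) _
  obtain ⟨U, hUo, hAU, H, hH⟩ := hANE (∀ n, X n) Ah hAhc (f.comp ⟨eh, ehc⟩)
  -- total extension of H
  set Hb : (∀ n, X n) → K := fun z => if h : z ∈ U then H ⟨z, h⟩ else k₀ with hHb_def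
  have hHbcOn : ContinuousOn Hb U := by
    rw [continuousOn_iff_continuous_restrict]
    have he : U.restrict Hb = fun z : U => H z := funext fun z => dif_pos z.2
    change Continuous (U.restrict Hb)
    rw [he]
    exact H.continuous
  have hHbU : ∀ z ∈ U, ContinuousAt Hb z := fun z hz =>
    hHbcOn.continuousAt (hUo.mem_nhds hz)
  have hHbA : ∀ (z) (hz : z ∈ Ah), Hb z = f (eh ⟨z, hz⟩) := by
    intro z hz
    have h1 : Hb z = H ⟨z, hAU hz⟩ := dif_pos (hAU hz)
    rw [h1, hH z hz]
    rfl
  -- cylinder neighborhoods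
  set N : ℕ → Set (∀ n, X n) := fun ρ => {z | ∃ x ∈ Ah, ∀ i ≤ ρ, z i = x i} with hN_def
  have hNanti : ∀ ρ ρ', ρ ≤ ρ' → N ρ' ⊆ N ρ := by
    rintro ρ ρ' h z ⟨x, hx, he⟩
    exact ⟨x, hx, fun i hi => he i (hi.trans h)⟩
  have hNc : ∀ ρ, IsClosed (N ρ) := by
    intro ρ
    have he : N ρ = (fun z : ∀ n, X n => fun i : Fin (ρ + 1) => z i) ⁻¹'
        ((fun z : ∀ n, X n => fun i : Fin (ρ + 1) => z i) '' Ah) := by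
      ext z
      constructor
      · rintro ⟨x, hx, he⟩
        exact ⟨x, hx, funext fun i => (he i (Nat.lt_succ_iff.1 i.isLt)).symm⟩
      · rintro ⟨x, hx, he⟩
        exact ⟨x, hx, fun i hi => (congrFun he ⟨i, Nat.lt_succ_iff.2 hi⟩).symm⟩
    rw [he]
    exact IsClosed.preimage (continuous_pi fun i : Fin (ρ + 1) => continuous_apply (i : ℕ))
      (hAhcomp.image (continuous_pi fun i : Fin (ρ + 1) => continuous_apply (i : ℕ))).isClosed
  have hNInt : (⋂ ρ, N ρ) ⊆ U := by
    intro z hz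
    apply hAU
    rw [← hAhc.closure_eq]
    rw [mem_closure_iff]
    intro O hO hzO
    obtain ⟨I, v, hv, hsub'⟩ := isOpen_pi_iff.1 hO z hzO
    obtain ⟨x, hx, hxe⟩ := Set.mem_iInter.1 hz (I.sup id)
    refine ⟨x, ?_, hx⟩
    apply hsub'
    intro i hi
    rw [← hxe i (Finset.le_sup (f := id) hi)]
    exact (hv i hi).2
  have hr₀ex : ∃ r₀, N r₀ ⊆ U := by
    by_contra hcon
    push_neg at hcon
    have hne : ∀ ρ, (N ρ ∩ Uᶜ).Nonempty := by
      intro ρ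
      obtain ⟨z, hz1, hz2⟩ := Set.not_subset.1 (hcon ρ)
      exact ⟨z, hz1, hz2⟩
    have hdir : Directed (· ⊇ ·) fun ρ => N ρ ∩ Uᶜ := fun ρ ρ' =>
      ⟨max ρ ρ', Set.inter_subset_inter_left _ (hNanti _ _ (le_max_left _ _)),
        Set.inter_subset_inter_left _ (hNanti _ _ (le_max_right _ _))⟩
    obtain ⟨z, hz⟩ := IsCompact.nonempty_iInter_of_directed_nonempty_isCompact_isClosed
      _ hdir hne (fun ρ => ((hNc ρ).inter hUo.isClosed_compl).isCompact)
      (fun ρ => (hNc ρ).inter hUo.isClosed_compl)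
    rw [Set.mem_iInter] at hz
    exact (hz 0).2 (hNInt (Set.mem_iInter.2 fun ρ => (hz ρ).1))
  obtain ⟨r₀, hr₀⟩ := hr₀ex
  -- the diagonal gadget
  obtain ⟨V, hVo, hVdiag, hVhom⟩ := gadget hANE
  -- choose a level r
  have hrex : ∃ r, r₀ ≤ r ∧ ∀ z ∈ Ah, (Hb z, Hb (sig ω x₀ r (z r))) ∈ V := by
    by_contra hcon
    push_neg at hcon
    choose zz hzz hzv using fun m => hcon (r₀ + m) (Nat.le_add_right _ _)
    obtain ⟨a, haA, φ, hφ, hconv⟩ := hAhcomp.tendsto_subseq hzz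
    have t2 : Filter.Tendsto (fun k => sig ω x₀ (r₀ + φ k) (zz (φ k) (r₀ + φ k)))
        Filter.atTop (nhds a) := by
      rw [tendsto_pi_nhds]
      intro i
      have hev : ∀ᶠ k in Filter.atTop,
          zz (φ k) i = sig ω x₀ (r₀ + φ k) (zz (φ k) (r₀ + φ k)) i := by
        rw [Filter.eventually_atTop]
        refine ⟨i, fun k hk => ?_⟩
        exact (sig_spec ω x₀ (hAhp _ (hzz (φ k))) _ i
          (hk.trans (hφ.le_apply.trans (Nat.le_add_left _ _)))).symm
      have t1 : Filter.Tendsto (fun k => zz (φ k) i) Filter.atTop (nhds (a i)) :=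
        ((continuous_apply i).continuousAt.tendsto).comp hconv
      exact t1.congr' hev
    have hca : ContinuousAt Hb a := hHbU a (hAU haA)
    have tpair : Filter.Tendsto
        (fun k => (Hb (zz (φ k)), Hb (sig ω x₀ (r₀ + φ k) (zz (φ k) (r₀ + φ k)))))
        Filter.atTop (nhds (Hb a, Hb a)) :=
      (hca.tendsto.comp hconv).prodMk_nhds (hca.tendsto.comp t2)
    have hev2 : ∀ᶠ k in Filter.atTop,
        (Hb (zz (φ k)), Hb (sig ω x₀ (r₀ + φ k) (zz (φ k) (r₀ + φ k)))) ∈ V :=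
      Filter.mem_map.1 (tpair (hVo.mem_nhds (hVdiag (Hb a))))
    obtain ⟨k, hk⟩ := hev2.exists
    exact hzv (φ k) hk
  obtain ⟨r, hrr₀, hrV⟩ := hrex
  -- the level-r closed set and partial map
  set Ar : Set (X r) := (fun z : ∀ n, X n => z r) '' Ah with hAr_def
  have hArc : IsClosed Ar := (hAhcomp.image (continuous_apply r)).isClosed
  have hsigN : ∀ y ∈ Ar, sig ω x₀ r y ∈ N r₀ := by
    rintro y ⟨z, hz, rfl⟩
    exact ⟨z, hz, fun i hi => sig_spec ω x₀ (hAhp _ hz) r i (hi.trans hrr₀)⟩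
  have hf'c : Continuous fun y : Ar => Hb (sig ω x₀ r y.1) := by
    rw [continuous_iff_continuousAt]
    intro y
    show ContinuousAt (Hb ∘ fun y : Ar => sig ω x₀ r y.1) y
    exact ContinuousAt.comp (hHbU _ (hr₀ (hsigN y.1 y.2)))
      (((sig_continuous ω hω x₀ r).comp continuous_subtype_val).continuousAt)
  set f' : C(Ar, K) := ⟨fun y => Hb (sig ω x₀ r y.1), hf'c⟩ with hf'_def
  have hθm : ∀ a : A, a.1.1 r ∈ Ar := fun a => ⟨a.1.1, ⟨a.1, a.2, rfl⟩, rfl⟩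
  set θ : C(A, Ar) := ⟨fun a => ⟨a.1.1 r, hθm a⟩,
    Continuous.subtype_mk ((continuous_apply r).comp
      (continuous_subtype_val.comp continuous_subtype_val)) _⟩ with hθ_def
  -- f is homotopic to f' ∘ θ
  have hfψ : f.Homotopic (f'.comp θ) := by
    refine (hVhom f (f'.comp θ) ?_)
    intro a
    have h1 : f a = Hb a.1.1 := by
      have hm : a.1.1 ∈ Ah := ⟨a.1, a.2, rfl⟩
      rw [hHbA a.1.1 hm]
    have h2 : (f'.comp θ) a = Hb (sig ω x₀ r (a.1.1 r)) := rfl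
    rw [h1, h2]
    exact hrV a.1.1 ⟨a.1, a.2, rfl⟩
  -- representative and extension in the system
  obtain ⟨p, hp𝓕, hsub, hphom⟩ := hrep r Ar hArc f'
  obtain ⟨j, hj, g, hg⟩ := hext r p hp𝓕
  set π : C(L, X (r + j)) := ⟨fun x => x.1 (r + j),
    (continuous_apply (r + j)).comp continuous_subtype_val⟩ with hπ_def
  set G : C(L, K) := g.comp π with hG_def
  have hGA : G.restrict A =
      (p.2.comp ⟨Set.inclusion hsub, continuous_inclusion hsub⟩).comp θ := by
    ext a
    have hxL : ∀ n, ω n (a.1.1 (n + 1)) = a.1.1 n := (hL a.1.1).1 a.1.2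
    have hbond : bond ω r j (a.1.1 (r + j)) = a.1.1 r := bond_mem ω hxL r j
    have hmem : bond ω r j (a.1.1 (r + j)) ∈ p.1.1 := by
      rw [hbond]
      exact hsub (hθm a)
    have h1 : G.restrict A a = g (a.1.1 (r + j)) := rfl
    rw [h1, hg _ hmem]
    show p.2 ⟨bond ω r j (a.1.1 (r + j)), hmem⟩ = p.2 ⟨a.1.1 r, hsub (hθm a)⟩
    congr 1
    exact Subtype.ext hbond
  have hGhom : (G.restrict A).Homotopic f := by
    rw [hGA]
    have h1 : ((p.2.comp ⟨Set.inclusion hsub, continuous_inclusion hsub⟩).comp θ).Homotopic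
        (f'.comp θ) := ContinuousMap.Homotopic.comp hphom (ContinuousMap.Homotopic.refl θ)
    exact h1.trans hfψ.symm
  exact het hANE hA f G hGhom
end

section
/- Let {γ_i : Y_i → X}_{i ∈ I} be a countable family of continuous surjections of compact metric spaces, and let Z ⊆ ∏_i Y_i be their pull-back, i.e., Z = { y ∈ ∏ Y_i : γ_p(y_p) = γ_q(y_q) for all p, q }. Suppose each γ_i is the orbit map of a continuous action of a compact group Γ_i on Y_i with X = Y_i/Γ_i. Then the product group Γ = ∏_i Γ_i acts continuously on Z coordinatewise, Z is a nonempty compact space, this action has orbit space Z/Γ homeomorphic to X, and the natural projection Z → X is the orbit map. -/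
/-- Let `γ i : Y i → X` be a countable family of orbit maps of continuous actions of
compact groups `Γ i` on compact metric spaces `Y i` with `X = Y i / Γ i`, and let
`Z ⊆ ∏ Y i` be their pull-back. Then the product group `Γ = ∏ Γ i` acts continuously
on `Z` coordinatewise, `Z` is a nonempty compact space, the natural projection
`Z → X` is a quotient map whose fibers are exactly the `Γ`-orbits; i.e. `Z/Γ ≅ X`
with the projection as orbit map. -/
theorem stmt_15 (I : Type*) [Countable I] [Nonempty I] (i₀ : I)
    (X : Type*) [MetricSpace X] [CompactSpace X] [Nonempty X]
    (Y : I → Type*) [∀ i, MetricSpace (Y i)] [∀ i, CompactSpace (Y i)]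
    (Γ : I → Type*) [∀ i, Group (Γ i)] [∀ i, TopologicalSpace (Γ i)]
    [∀ i, IsTopologicalGroup (Γ i)] [∀ i, CompactSpace (Γ i)]
    [∀ i, MulAction (Γ i) (Y i)] [∀ i, ContinuousSMul (Γ i) (Y i)]
    (γ : ∀ i, C(Y i, X)) (hsurj : ∀ i, Function.Surjective (γ i))
    (hinv : ∀ (i) (g : Γ i) (y : Y i), γ i (g • y) = γ i y)
    (horb : ∀ (i) (y y' : Y i), γ i y = γ i y' → ∃ g : Γ i, g • y = y')
    (Z : Set (∀ i, Y i)) (hZ : ∀ y, y ∈ Z ↔ ∀ p q, γ p (y p) = γ q (y q)) :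
    Z.Nonempty ∧ IsCompact Z ∧
    (∀ (g : ∀ i, Γ i) (y : ∀ i, Y i), y ∈ Z → (fun i => g i • y i) ∈ Z) ∧
    Continuous (fun p : (∀ i, Γ i) × (∀ i, Y i) => fun i => p.1 i • p.2 i) ∧
    Topology.IsQuotientMap (fun z : ↥Z => γ i₀ ((z : ∀ i, Y i) i₀)) ∧
    (∀ z z' : ↥Z, γ i₀ ((z : ∀ i, Y i) i₀) = γ i₀ ((z' : ∀ i, Y i) i₀) ↔
      ∃ g : ∀ i, Γ i, ∀ i, g i • (z : ∀ i, Y i) i = (z' : ∀ i, Y i) i) := by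
  -- a section: for any x there is a point of Z mapping to x
  have hsec : ∀ x : X, ∃ y ∈ Z, ∀ i, γ i (y i) = x := by
    intro x
    choose y hy using fun i => hsurj i x
    exact ⟨y, (hZ y).2 (fun p q => by rw [hy p, hy q]), hy⟩
  obtain ⟨y₀, hy₀Z, _⟩ := hsec (Classical.arbitrary X)
  have hne : Z.Nonempty := ⟨y₀, hy₀Z⟩
  have hclosed : IsClosed Z := by
    have : Z = ⋂ (p : I) (q : I), {y : ∀ i, Y i | γ p (y p) = γ q (y q)} := by
      ext y; simp [hZ y, Set.mem_iInter]
    rw [this]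
    exact isClosed_iInter fun p => isClosed_iInter fun q =>
      isClosed_eq ((γ p).continuous.comp (continuous_apply p))
        ((γ q).continuous.comp (continuous_apply q))
  have hcpt : IsCompact Z := hclosed.isCompact
  refine ⟨hne, hcpt, ?_, ?_, ?_, ?_⟩
  · intro g y hy
    rw [hZ] at hy ⊢
    intro p q
    rw [hinv p, hinv q]; exact hy p q
  · exact continuous_pi fun i =>
      ((continuous_apply i).comp continuous_fst).smul
        ((continuous_apply i).comp continuous_snd)
  · -- quotient map: continuous surjection from compact to T2
    have hcont : Continuous (fun z : ↥Z => γ i₀ ((z : ∀ i, Y i) i₀)) :=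
      (γ i₀).continuous.comp ((continuous_apply i₀).comp continuous_subtype_val)
    have hs : Function.Surjective (fun z : ↥Z => γ i₀ ((z : ∀ i, Y i) i₀)) := by
      intro x
      obtain ⟨y, hyZ, hy⟩ := hsec x
      exact ⟨⟨y, hyZ⟩, hy i₀⟩
    haveI : CompactSpace ↥Z := isCompact_iff_compactSpace.1 hcpt
    exact Topology.IsQuotientMap.of_surjective_continuous hs hcont
  · intro z z'
    constructor
    · intro h
      have hz := (hZ _).1 z.2
      have hz' := (hZ _).1 z'.2
      have : ∀ i, γ i ((z : ∀ i, Y i) i) = γ i ((z' : ∀ i, Y i) i) := fun i => by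
        rw [hz i i₀, hz' i i₀, h]
      choose g hg using fun i => horb i _ _ (this i)
      exact ⟨g, hg⟩
    · rintro ⟨g, hg⟩
      rw [← hg i₀, hinv]
end
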